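/- For a single-uniprior index-coding instance with message lengths q_i, the optimal index codelength satisfies ℓ*(G) ≥ Σ_{i predecessor of some leaf vertex of G} q_i. -/

import Mathlib

/-- A valid index code for a single-uniprior index-coding instance on the
information-flow graph `A` on `Fin n`, where message `x i` consists of `q i` uniform
bits and receiver `i` knows `x i` a priori: whenever there is an arc `(j → i)`,
receiver `i` can decode `x j` from the codeword and its own message, i.e. `x j` is
determined by `(E x, x i)`. -/
def IsIndexCode {n : ℕ} (A : Fin n → Fin n → Prop) (q : Fin n → ℕ) {ℓ : ℕ}
    (E : (∀ i, Fin (q i) → Bool) → (Fin ℓ → Bool)) : Prop :=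
  ∀ i j, A j i → ∀ x y, E x = E y → x i = y i → x j = y j

/-- The optimal index codelength `ℓ*(G)`: the minimum number of broadcast bits of a
valid index code. -/
noncomputable def optLen {n : ℕ} (A : Fin n → Fin n → Prop) (q : Fin n → ℕ) : ℕ :=
  sInf {ℓ : ℕ | ∃ E : (∀ i, Fin (q i) → Bool) → (Fin ℓ → Bool), IsIndexCode A q E}

open Classical in
/-- Lower bound: the optimal index codelength is at least the total length of the
messages of all predecessors of leaf vertices. -/
theorem optLen_ge_sum_predecessors_of_leaves {n : ℕ} (A : Fin n → Fin n → Prop)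
    (q : Fin n → ℕ) :
    ∑ i ∈ Finset.univ.filter
        (fun i => ∃ l : Fin n, (∀ k, ¬ A l k) ∧ Relation.TransGen A i l), q i ≤
      optLen A q := by
  classical
  set S : Finset (Fin n) := Finset.univ.filter
      (fun i => ∃ l : Fin n, (∀ k, ¬ A l k) ∧ Relation.TransGen A i l) with hS
  -- the defining set of optLen is nonempty
  have hne : {ℓ : ℕ | ∃ E : (∀ i, Fin (q i) → Bool) → (Fin ℓ → Bool),
      IsIndexCode A q E}.Nonempty := by
    refine ⟨∑ i, q i, ?_⟩
    have hcard : Fintype.card (∀ i, Fin (q i) → Bool)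
        ≤ Fintype.card (Fin (∑ i, q i) → Bool) := by
      simp [Fintype.card_pi, Finset.prod_pow_eq_pow_sum]
    obtain ⟨E⟩ := Function.Embedding.nonempty_of_card_le hcard
    exact ⟨E, fun i j _ x y hxy _ => by rw [E.injective hxy]⟩
  have hmem : optLen A q ∈ {ℓ : ℕ | ∃ E : (∀ i, Fin (q i) → Bool) → (Fin ℓ → Bool),
      IsIndexCode A q E} := Nat.sInf_mem hne
  obtain ⟨E, hE⟩ := hmem
  -- key decodability lemma
  have key : ∀ x y : ∀ i, Fin (q i) → Bool, E x = E y →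
      (∀ i, i ∉ S → x i = y i) → ∀ i, i ∈ S → x i = y i := by
    intro x y hExy hoff i hi
    simp only [hS, Finset.mem_filter, Finset.mem_univ, true_and] at hi
    obtain ⟨l, hl, hpath⟩ := hi
    induction hpath using Relation.TransGen.head_induction_on with
    | single h =>
      have hlS : l ∉ S := by
        simp only [hS, Finset.mem_filter, Finset.mem_univ, true_and]
        rintro ⟨l', hl', hp⟩
        obtain ⟨c, hc, -⟩ := Relation.TransGen.head'_iff.mp hp
        exact hl c hc
      exact hE l _ h x y hExy (hoff l hlS)
    | head h₁ h₂ ih =>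
      exact hE _ _ h₁ x y hExy ih
  -- injection from the messages supported on S into codewords
  let ext : (∀ i : S, Fin (q i) → Bool) → (∀ i, Fin (q i) → Bool) :=
    fun z i => if h : i ∈ S then z ⟨i, h⟩ else fun _ => false
  have hinj : Function.Injective (fun z => E (ext z)) := by
    intro z w h
    have hoff : ∀ i, i ∉ S → ext z i = ext w i := by
      intro i hi; simp [ext, hi]
    have hon := key (ext z) (ext w) h hoff
    funext i
    have h2 := hon i i.2
    simpa [ext, i.2] using h2
  have hcard := Fintype.card_le_of_injective _ hinj
  have h1 : Fintype.card (∀ i : S, Fin (q i) → Bool) = 2 ^ ∑ i ∈ S, q i := by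
    rw [Fintype.card_pi]
    simp only [Fintype.card_fun, Fintype.card_fin, Fintype.card_bool]
    rw [Finset.prod_pow_eq_pow_sum]
    congr 1
    exact Finset.sum_attach S q
  have h2 : Fintype.card (Fin (optLen A q) → Bool) = 2 ^ optLen A q := by
    simp
  rw [h1, h2] at hcard
  exact (Nat.pow_le_pow_iff_right one_lt_two).mp hcard
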